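/- Let F, G : ℤ → ℝ be supported on {-n,...,n-1} with DFTs a_k, ã_k on {-n,...,n-1}, both nonvanishing. If the bispectra agree, i.e., ã_{k₁} ã_{k₂} ã_{-k₁-k₂} = a_{k₁} a_{k₂} a_{-k₁-k₂} for all k₁,k₂ ∈ {-n,...,n-1} (indices mod 2n), then there exists τ ∈ {-n,...,n-1} such that G = F_τ, i.e., G is a cyclic shift of F on its support. -/

import Mathlib

open Complex

/-- Representative of `a` modulo `2n` taken in `{-n,...,n-1}`. -/
def crep (n a : ℤ) : ℤ := (a + n) % (2 * n) - n

/-- The cyclic shift `F_τ` of a signal `F` supported on `{-n,...,n-1}`. -/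
noncomputable def cyc (n : ℤ) (F : ℤ → ℝ) (τ x : ℤ) : ℝ :=
  if -n ≤ x ∧ x < n then F (crep n (x + τ)) else 0

/-- The DFT `a_k` of `F` on `{-n,...,n-1}` (the formula is `2n`-periodic
in `k`, giving the periodic extension of the index). -/
noncomputable def acoef (n : ℤ) (F : ℤ → ℝ) (k : ℤ) : ℂ :=
  ∑ x ∈ Finset.Ico (-n) n,
    (F x : ℂ) * Complex.exp (-2 * Real.pi * Complex.I * k * x / (2 * (n : ℂ)))

/-- The basic `2n`-th root of unity. -/
noncomputable def zet (n : ℤ) : ℂ := Complex.exp (2 * Real.pi * Complex.I / (2 * (n : ℂ)))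

lemma zet_ne_zero (n : ℤ) : zet n ≠ 0 := Complex.exp_ne_zero _

lemma zet_zpow (n : ℤ) (j : ℤ) :
    zet n ^ j = Complex.exp (2 * Real.pi * Complex.I * j / (2 * (n : ℂ))) := by
  rw [zet, ← Complex.exp_int_mul]
  congr 1
  ring

lemma two_n_ne {n : ℤ} (hn : 0 < n) : (2 * (n : ℂ)) ≠ 0 := by
  have : (n : ℂ) ≠ 0 := by exact_mod_cast hn.ne'
  simp [this]

lemma zet_pow_two_n {n : ℤ} (hn : 0 < n) : zet n ^ (2 * n) = 1 := by
  rw [zet_zpow]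
  have hc : ((2 * n : ℤ) : ℂ) = 2 * (n : ℂ) := by push_cast; ring
  rw [hc, mul_div_assoc, div_self (two_n_ne hn), mul_one]
  exact Complex.exp_two_pi_mul_I

lemma zet_zpow_congr {n : ℤ} (hn : 0 < n) {a b : ℤ} (h : 2 * n ∣ a - b) :
    zet n ^ a = zet n ^ b := by
  obtain ⟨c, hc⟩ := h
  have hab : a = b + 2 * n * c := by linarith
  rw [hab, zpow_add₀ (zet_ne_zero n), zpow_mul, zet_pow_two_n hn, one_zpow, mul_one]

lemma zet_prim {n : ℤ} (hn : 0 < n) {N : ℕ} (hN : (N : ℤ) = 2 * n) :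
    IsPrimitiveRoot (zet n) N := by
  have hN0 : N ≠ 0 := by omega
  have h := Complex.isPrimitiveRoot_exp N hN0
  have hcast : (N : ℂ) = 2 * (n : ℂ) := by exact_mod_cast congrArg (Int.cast : ℤ → ℂ) hN
  rwa [hcast] at h

lemma eq_of_small_dvd {n : ℤ} (hn : 0 < n) {a b : ℤ} (ha : -n ≤ a ∧ a < n)
    (hb : -n ≤ b ∧ b < n) (h : 2 * n ∣ a - b) : a = b := by
  rcases eq_or_ne a b with rfl | hne
  · rfl
  · have h1 : (0:ℤ) < |a - b| := abs_pos.mpr (sub_ne_zero.mpr hne)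
    have h2 : 2 * n ∣ |a - b| := (dvd_abs _ _).mpr h
    have h3 := Int.le_of_dvd h1 h2
    have h4 : |a - b| < 2 * n := abs_sub_lt_iff.mpr ⟨by omega, by omega⟩
    omega

lemma crep_mem {n : ℤ} (hn : 0 < n) (a : ℤ) : crep n a ∈ Finset.Ico (-n) n := by
  have h1 : 0 ≤ (a + n) % (2 * n) := Int.emod_nonneg _ (by omega)
  have h2 : (a + n) % (2 * n) < 2 * n := Int.emod_lt_of_pos _ (by omega)
  simp only [crep, Finset.mem_Ico]
  omega

lemma crep_dvd (n a : ℤ) : 2 * n ∣ a - crep n a := by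
  refine ⟨(a + n) / (2 * n), ?_⟩
  have h := Int.mul_ediv_add_emod (a + n) (2 * n)
  unfold crep
  linarith

lemma acoef_eq {n : ℤ} (F : ℤ → ℝ) (k : ℤ) :
    acoef n F k = ∑ x ∈ Finset.Ico (-n) n, (F x : ℂ) * zet n ^ (-(k * x)) := by
  unfold acoef
  refine Finset.sum_congr rfl fun x _ => ?_
  rw [zet_zpow]
  congr 1
  push_cast
  ring

lemma acoef_congr {n : ℤ} (hn : 0 < n) (F : ℤ → ℝ) {k l : ℤ} (h : 2 * n ∣ k - l) :
    acoef n F k = acoef n F l := by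
  rw [acoef_eq, acoef_eq]
  refine Finset.sum_congr rfl fun x _ => ?_
  congr 1
  refine zet_zpow_congr hn ?_
  have h2 : 2 * n ∣ (l - k) * x := (dvd_sub_comm.mp h).mul_right x
  rw [show -(k * x) - -(l * x) = (l - k) * x by ring]
  exact h2

lemma orth {n : ℤ} (hn : 0 < n) {N : ℕ} (hN : (N : ℤ) = 2 * n) (d : ℤ) :
    ∑ k ∈ Finset.Ico (-n) n, zet n ^ (k * d) =
      if 2 * n ∣ d then ((2 * n : ℤ) : ℂ) else 0 := by
  split_ifs with hd
  · have : ∀ k ∈ Finset.Ico (-n) n, zet n ^ (k * d) = 1 := by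
      intro k _
      have : zet n ^ (k * d) = zet n ^ (0 : ℤ) := by
        refine zet_zpow_congr hn ?_
        rw [sub_zero]
        exact hd.mul_left k
      simpa using this
    rw [Finset.sum_congr rfl this, Finset.sum_const, Int.card_Ico, nsmul_eq_mul, mul_one]
    have h2 : ((n - -n).toNat : ℤ) = 2 * n := by omega
    exact_mod_cast congrArg (Int.cast : ℤ → ℂ) h2
  · -- geometric: w = zet^d ≠ 1, and w * S = S via shift
    set w : ℂ := zet n ^ d with hw
    have hw0 : w ≠ 0 := zpow_ne_zero _ (zet_ne_zero n)
    have hw1 : w ≠ 1 := by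
      intro h1
      have : zet n ^ d = 1 := h1
      have := ((zet_prim hn hN).zpow_eq_one_iff_dvd d).mp this
      rw [hN] at this
      exact hd this
    have hterm : ∀ k : ℤ, zet n ^ (k * d) = w ^ k := by
      intro k
      rw [hw, ← zpow_mul, mul_comm]
    rw [Finset.sum_congr rfl fun k _ => hterm k]
    set S : ℂ := ∑ k ∈ Finset.Ico (-n) n, w ^ k with hS
    have key : w * S = S := by
      have h1 : w * S = ∑ k ∈ Finset.Ico (-n) n, w ^ (k + 1) := by
        rw [hS, Finset.mul_sum]
        refine Finset.sum_congr rfl fun k _ => ?_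
        rw [zpow_add₀ hw0, zpow_one]
        ring
      have h2 : ∑ k ∈ Finset.Ico (-n) n, w ^ (k + 1)
          = ∑ k ∈ Finset.Ico (-n + 1) (n + 1), w ^ k := by
        rw [← Finset.map_add_right_Ico (-n) n 1, Finset.sum_map]
        rfl
      have hwn : w ^ (n : ℤ) = w ^ (-n : ℤ) := by
        rw [hw, ← zpow_mul, ← zpow_mul]
        refine zet_zpow_congr hn ?_
        rw [show d * n - d * (-n) = d * (2 * n) by ring]
        exact Dvd.dvd.mul_left dvd_rfl d
      have hs1 : Finset.Ico (-n) (n + 1) = insert n (Finset.Ico (-n) n) := by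
        ext x
        simp only [Finset.mem_Ico, Finset.mem_insert]
        omega
      have hs2 : Finset.Ico (-n) (n + 1) = insert (-n) (Finset.Ico (-n + 1) (n + 1)) := by
        ext x
        simp only [Finset.mem_Ico, Finset.mem_insert]
        omega
      have e1 : ∑ k ∈ Finset.Ico (-n) (n + 1), w ^ k = w ^ (n : ℤ) + S := by
        rw [hs1, Finset.sum_insert (by simp [Finset.mem_Ico])]
      have e2 : ∑ k ∈ Finset.Ico (-n) (n + 1), w ^ k
          = w ^ (-n : ℤ) + ∑ k ∈ Finset.Ico (-n + 1) (n + 1), w ^ k := by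
        rw [hs2, Finset.sum_insert (by simp [Finset.mem_Ico])]
      have : w ^ (-n : ℤ) + ∑ k ∈ Finset.Ico (-n + 1) (n + 1), w ^ k = w ^ (n : ℤ) + S := by
        rw [← e2, e1]
      rw [h1, h2]
      rw [hwn] at this
      linear_combination this
    have : (w - 1) * S = 0 := by linear_combination key
    rcases mul_eq_zero.mp this with h | h
    · exact absurd (by linear_combination h) hw1
    · exact h

lemma inv_sum {n : ℤ} (hn : 0 < n) {N : ℕ} (hN : (N : ℤ) = 2 * n) (F : ℤ → ℝ) {x : ℤ}
    (hx : x ∈ Finset.Ico (-n) n) :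
    ∑ k ∈ Finset.Ico (-n) n, acoef n F k * zet n ^ (k * x) = ((2 * n : ℤ) : ℂ) * (F x : ℂ) := by
  have step : ∀ k ∈ Finset.Ico (-n) n,
      acoef n F k * zet n ^ (k * x)
        = ∑ y ∈ Finset.Ico (-n) n, (F y : ℂ) * zet n ^ (k * (x - y)) := by
    intro k _
    rw [acoef_eq, Finset.sum_mul]
    refine Finset.sum_congr rfl fun y _ => ?_
    rw [mul_assoc, ← zpow_add₀ (zet_ne_zero n)]
    congr 1
    ring
  rw [Finset.sum_congr rfl step, Finset.sum_comm]
  have inner : ∀ y ∈ Finset.Ico (-n) n,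
      ∑ k ∈ Finset.Ico (-n) n, (F y : ℂ) * zet n ^ (k * (x - y))
        = if y = x then ((2 * n : ℤ) : ℂ) * (F x : ℂ) else 0 := by
    intro y hy
    rw [← Finset.mul_sum, orth hn hN (x - y)]
    split_ifs with h1 h2 h2
    · rw [h2]; ring
    · exfalso
      apply h2
      refine (eq_of_small_dvd hn ?_ ?_ h1).symm
      · exact Finset.mem_Ico.mp hx
      · exact Finset.mem_Ico.mp hy
    · exfalso; apply h1; rw [h2]; simp
    · ring
  rw [Finset.sum_congr rfl inner, Finset.sum_ite_eq' (Finset.Ico (-n) n) x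
    (fun _ => ((2 * n : ℤ) : ℂ) * (F x : ℂ))]
  simp [hx]

lemma acoef_cyc {n : ℤ} (hn : 0 < n) (F : ℤ → ℝ) (τ k : ℤ) :
    acoef n (cyc n F τ) k = zet n ^ (k * τ) * acoef n F k := by
  rw [acoef_eq, acoef_eq, Finset.mul_sum]
  refine Finset.sum_nbij' (fun x => crep n (x + τ)) (fun y => crep n (y - τ))
    (fun a _ => crep_mem hn _) (fun a _ => crep_mem hn _) ?_ ?_ ?_
  · intro a hamem
    refine eq_of_small_dvd hn (Finset.mem_Ico.mp (crep_mem hn _)) (Finset.mem_Ico.mp hamem) ?_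
    have h1 := crep_dvd n (a + τ)
    have h2 := crep_dvd n (crep n (a + τ) - τ)
    have : crep n (crep n (a + τ) - τ) - a
        = ((crep n (a + τ) - τ) - crep n (crep n (a + τ) - τ)) * (-1)
          + ((a + τ) - crep n (a + τ)) * (-1) := by ring
    rw [this]
    exact dvd_add (h2.mul_right _) (h1.mul_right _)
  · intro a hamem
    refine eq_of_small_dvd hn (Finset.mem_Ico.mp (crep_mem hn _)) (Finset.mem_Ico.mp hamem) ?_
    have h1 := crep_dvd n (a - τ)
    have h2 := crep_dvd n (crep n (a - τ) + τ)
    have : crep n (crep n (a - τ) + τ) - a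
        = ((crep n (a - τ) + τ) - crep n (crep n (a - τ) + τ)) * (-1)
          + ((a - τ) - crep n (a - τ)) * (-1) := by ring
    rw [this]
    exact dvd_add (h2.mul_right _) (h1.mul_right _)
  · intro a hamem
    have hmem := Finset.mem_Ico.mp hamem
    rw [cyc, if_pos hmem]
    rw [mul_comm (zet n ^ (k * τ)) _, mul_assoc, ← zpow_add₀ (zet_ne_zero n)]
    congr 1
    refine zet_zpow_congr hn ?_
    have h1 := crep_dvd n (a + τ)
    have : -(k * a) - (-(k * crep n (a + τ)) + k * τ)
        = ((a + τ) - crep n (a + τ)) * (-k) := by ring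
    rw [this]
    exact h1.mul_right _

theorem stmt8 (n : ℤ) (hn : 0 < n) (F G : ℤ → ℝ)
    (hF : ∀ x : ℤ, (x < -n ∨ n ≤ x) → F x = 0)
    (hG : ∀ x : ℤ, (x < -n ∨ n ≤ x) → G x = 0)
    (ha : ∀ k ∈ Finset.Ico (-n) n, acoef n F k ≠ 0)
    (haG : ∀ k ∈ Finset.Ico (-n) n, acoef n G k ≠ 0)
    (hbispec : ∀ k₁ ∈ Finset.Ico (-n) n, ∀ k₂ ∈ Finset.Ico (-n) n,
      acoef n G k₁ * acoef n G k₂ * acoef n G (-k₁ - k₂) =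
        acoef n F k₁ * acoef n F k₂ * acoef n F (-k₁ - k₂)) :
    ∃ τ ∈ Finset.Ico (-n) n, ∀ x : ℤ, G x = cyc n F τ x := by
  obtain ⟨N, hN⟩ : ∃ N : ℕ, (N : ℤ) = 2 * n := ⟨(2 * n).toNat, by omega⟩
  haveI : NeZero N := ⟨by omega⟩
  -- extended nonvanishing
  have haF' : ∀ k : ℤ, acoef n F k ≠ 0 := fun k => by
    rw [acoef_congr hn F (crep_dvd n k)]
    exact ha _ (crep_mem hn k)
  have haG' : ∀ k : ℤ, acoef n G k ≠ 0 := fun k => by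
    rw [acoef_congr hn G (crep_dvd n k)]
    exact haG _ (crep_mem hn k)
  set h : ℤ → ℂ := fun k => acoef n G k / acoef n F k with hh
  have hne : ∀ k, h k ≠ 0 := fun k => div_ne_zero (haG' k) (haF' k)
  have hper : ∀ {k l : ℤ}, 2 * n ∣ k - l → h k = h l := by
    intro k l hd
    simp only [hh]
    rw [acoef_congr hn G hd, acoef_congr hn F hd]
  -- triple relation
  have htri : ∀ k₁ k₂ : ℤ, h k₁ * h k₂ * h (-k₁ - k₂) = 1 := by
    intro k₁ k₂
    have key := hbispec (crep n k₁) (crep_mem hn k₁) (crep n k₂) (crep_mem hn k₂)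
    have d3 : 2 * n ∣ (-crep n k₁ - crep n k₂) - (-k₁ - k₂) := by
      have h1 := crep_dvd n k₁
      have h2 := crep_dvd n k₂
      have : (-crep n k₁ - crep n k₂) - (-k₁ - k₂)
          = (k₁ - crep n k₁) + (k₂ - crep n k₂) := by ring
      rw [this]
      exact dvd_add h1 h2
    have eG1 : acoef n G (crep n k₁) = acoef n G k₁ := (acoef_congr hn G (crep_dvd n k₁)).symm
    have eG2 : acoef n G (crep n k₂) = acoef n G k₂ := (acoef_congr hn G (crep_dvd n k₂)).symm
    have eG3 : acoef n G (-crep n k₁ - crep n k₂) = acoef n G (-k₁ - k₂) := acoef_congr hn G d3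
    have eF1 : acoef n F (crep n k₁) = acoef n F k₁ := (acoef_congr hn F (crep_dvd n k₁)).symm
    have eF2 : acoef n F (crep n k₂) = acoef n F k₂ := (acoef_congr hn F (crep_dvd n k₂)).symm
    have eF3 : acoef n F (-crep n k₁ - crep n k₂) = acoef n F (-k₁ - k₂) := acoef_congr hn F d3
    rw [eG1, eG2, eG3, eF1, eF2, eF3] at key
    simp only [hh]
    rw [div_mul_div_comm, div_mul_div_comm, key, div_self
      (mul_ne_zero (mul_ne_zero (haF' _) (haF' _)) (haF' _))]
  -- h 0 = 1
  have hreal : ∀ (H : ℤ → ℝ), acoef n H 0 = ((∑ x ∈ Finset.Ico (-n) n, H x : ℝ) : ℂ) := by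
    intro H
    rw [acoef_eq]
    push_cast
    refine Finset.sum_congr rfl fun x _ => ?_
    simp
  have h0 : h 0 = 1 := by
    have hcube := htri 0 0
    simp only [neg_zero, sub_zero, zero_sub] at hcube
    set r : ℝ := (∑ x ∈ Finset.Ico (-n) n, G x) / (∑ x ∈ Finset.Ico (-n) n, F x) with hr
    have hh0 : h 0 = (r : ℂ) := by
      simp only [hh, hreal F, hreal G, hr]
      push_cast
      ring
    rw [hh0] at hcube ⊢
    have hr3 : (r : ℂ) ^ 3 = 1 := by linear_combination hcube
    have hr3' : r ^ 3 = 1 := by exact_mod_cast hr3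
    have : r = 1 := by
      have hodd : Odd 3 := by decide
      have := (hodd.strictMono_pow (R := ℝ)).injective (a₁ := r) (a₂ := 1)
        (by simpa using hr3')
      exact this
    rw [this]; norm_num
  have hinvk : ∀ k : ℤ, h k * h (-k) = 1 := by
    intro k
    have := htri k 0
    rw [h0] at this
    simpa using this
  have hmul : ∀ a b : ℤ, h (a + b) = h a * h b := by
    intro a b
    have h1 := htri a b
    have h2 := hinvk (a + b)
    have hrw : h (-a - b) = h (-(a + b)) := by rw [show -a - b = -(a + b) by ring]
    rw [hrw] at h1
    calc h (a + b) = h (a + b) * (h a * h b * h (-(a + b))) := by rw [h1, mul_one]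
    _ = (h (a + b) * h (-(a + b))) * (h a * h b) := by ring
    _ = h a * h b := by rw [h2, one_mul]
  have hzpow : ∀ k : ℤ, h k = h 1 ^ k := by
    have hne1 := hne 1
    intro k
    induction k using Int.induction_on with
    | zero => simpa using h0
    | succ i ih =>
        rw [hmul i 1, ih, zpow_add_one₀ hne1]
    | pred i ih =>
        have e : h (-(i : ℤ) - 1) = h (-(i : ℤ)) * h (-1) := by
          rw [show (-(i : ℤ) - 1) = (-(i : ℤ)) + (-1) by ring, hmul]
        have hm1 : h (-1) = (h 1)⁻¹ := eq_inv_of_mul_eq_one_left (by rw [mul_comm]; exact hinvk 1)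
        rw [e, ih, hm1, zpow_sub_one₀ hne1]
  have hrootN : h 1 ^ N = 1 := by
    have h1 : h (N : ℤ) = h 0 := hper (by simp [hN])
    rw [hzpow (N : ℤ), h0] at h1
    rw [← zpow_natCast]
    exact h1
  obtain ⟨m, hmN, hm⟩ := (zet_prim hn hN).eq_pow_of_pow_eq_one hrootN
  -- now h k = zet ^ (m * k)
  have hk_eq : ∀ k : ℤ, h k = zet n ^ ((m : ℤ) * k) := by
    intro k
    rw [hzpow k, ← hm, ← zpow_natCast (zet n) m, ← zpow_mul]
  refine ⟨crep n (m : ℤ), crep_mem hn (m : ℤ), ?_⟩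
  set τ := crep n (m : ℤ) with hτ
  have hGc : ∀ k : ℤ, acoef n G k = acoef n (cyc n F τ) k := by
    intro k
    rw [acoef_cyc hn F τ k]
    have e1 : zet n ^ (k * τ) = zet n ^ ((m : ℤ) * k) := by
      refine zet_zpow_congr hn ?_
      have hd := crep_dvd n (m : ℤ)
      rw [show k * τ - (m : ℤ) * k = ((m : ℤ) - τ) * (-k) by ring]
      exact hd.mul_right _
    rw [e1, ← hk_eq k]
    simp only [hh]
    exact (div_mul_cancel₀ (acoef n G k) (haF' k)).symm
  intro x
  by_cases hx : -n ≤ x ∧ x < n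
  · have hxmem : x ∈ Finset.Ico (-n) n := Finset.mem_Ico.mpr hx
    have h1 := inv_sum hn hN G hxmem
    have h2 := inv_sum hn hN (cyc n F τ) hxmem
    rw [Finset.sum_congr rfl (fun k _ => by rw [hGc k])] at h1
    have hEq : ((2 * n : ℤ) : ℂ) * (G x : ℂ) = ((2 * n : ℤ) : ℂ) * ((cyc n F τ x : ℝ) : ℂ) := by
      rw [← h1, ← h2]
    have h2n : ((2 * n : ℤ) : ℂ) ≠ 0 := by
      simp only [ne_eq, Int.cast_eq_zero]
      omega
    have := mul_left_cancel₀ h2n hEq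
    exact_mod_cast this
  · rw [cyc, if_neg hx]
    exact hG x (by omega)
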